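/- Let τ = (1+i√11)/2, and let T₁ = [[1,−1,−1+τ],[0,1,1],[0,0,1]], T_τ = [[1,−1+τ,−2+τ],[0,1,τ],[0,0,1]], T_v = [[1,0,1−2τ],[0,1,0],[0,0,1]], R = diag(1,−1,1), viewed as elements of GL(3,ℂ). Then every element γ of the subgroup of GL(3,ℂ) generated by {T₁, T_τ, T_v, R} can be written as γ = R^p · T_v^n · T₁^m · T_τ^l for some integers m, n, l and some p ∈ {0,1}. -/
import Mathlib


open Matrix

noncomputable def τ : ℂ := (1 + Complex.I * (Real.sqrt 11 : ℂ)) / 2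

theorem htau : τ * τ = τ - 3 := by
  have h : (Real.sqrt 11 : ℂ) * (Real.sqrt 11 : ℂ) = 11 := by
    exact_mod_cast congrArg Complex.ofReal (Real.mul_self_sqrt (by norm_num : (0:ℝ) ≤ 11))
  unfold τ
  linear_combination ((Complex.I * Complex.I) / 4) * h + (11 / 4) * Complex.I_mul_I

theorem htau2 : τ ^ 2 = τ - 3 := by rw [sq]; exact htau

set_option maxHeartbeats 2000000 in
theorem normal_form_cusp_stabilizer_d11
    (T₁ Tτ Tv R : GL (Fin 3) ℂ)
    (hT₁ : (T₁ : Matrix (Fin 3) (Fin 3) ℂ) = !![1, -1, -1 + τ; 0, 1, 1; 0, 0, 1])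
    (hTτ : (Tτ : Matrix (Fin 3) (Fin 3) ℂ) = !![1, -1 + τ, -2 + τ; 0, 1, τ; 0, 0, 1])
    (hTv : (Tv : Matrix (Fin 3) (Fin 3) ℂ) = !![1, 0, 1 - 2 * τ; 0, 1, 0; 0, 0, 1])
    (hR : (R : Matrix (Fin 3) (Fin 3) ℂ) = !![1, 0, 0; 0, -1, 0; 0, 0, 1])
    (γ : GL (Fin 3) ℂ) (hγ : γ ∈ Subgroup.closure {T₁, Tτ, Tv, R}) :
    ∃ (m n l : ℤ) (p : ℕ), p ≤ 1 ∧ γ = R ^ p * Tv ^ n * T₁ ^ m * Tτ ^ l := by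
  -- basic matrix relations
  have r1 : Tv * T₁ = T₁ * Tv := by
    ext i j
    simp only [Units.val_mul, hT₁, hTv]
    fin_cases i <;> fin_cases j <;>
      simp [Matrix.mul_apply, Fin.sum_univ_three, Matrix.vecHead, Matrix.vecTail] <;>
      (try ring_nf) <;> (try (rw [htau2]; ring))
  have r2 : Tv * Tτ = Tτ * Tv := by
    ext i j
    simp only [Units.val_mul, hTτ, hTv]
    fin_cases i <;> fin_cases j <;>
      simp [Matrix.mul_apply, Fin.sum_univ_three, Matrix.vecHead, Matrix.vecTail] <;>
      (try ring_nf) <;> (try (rw [htau2]; ring))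
  have r3 : Tv * R = R * Tv := by
    ext i j
    simp only [Units.val_mul, hR, hTv]
    fin_cases i <;> fin_cases j <;>
      simp [Matrix.mul_apply, Fin.sum_univ_three, Matrix.vecHead, Matrix.vecTail] <;>
      (try ring_nf) <;> (try (rw [htau2]; ring))
  have r4 : T₁ * Tτ = Tτ * T₁ * Tv := by
    ext i j
    simp only [Units.val_mul, hT₁, hTτ, hTv]
    fin_cases i <;> fin_cases j <;>
      simp [Matrix.mul_apply, Fin.sum_univ_three, Matrix.vecHead, Matrix.vecTail] <;>
      (try ring_nf) <;> (try (rw [htau2]; ring))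
  have r5 : R * R = 1 := by
    ext i j
    simp only [Units.val_mul, Units.val_one, hR]
    fin_cases i <;> fin_cases j <;>
      simp [Matrix.mul_apply, Fin.sum_univ_three, Matrix.one_apply, Matrix.vecHead,
        Matrix.vecTail] <;>
      (try ring_nf) <;> (try (rw [htau2]; ring))
  have r6 : T₁ * R * (T₁ * Tv) = R := by
    ext i j
    simp only [Units.val_mul, hT₁, hTv, hR]
    fin_cases i <;> fin_cases j <;>
      simp [Matrix.mul_apply, Fin.sum_univ_three, Matrix.vecHead, Matrix.vecTail] <;>
      (try ring_nf) <;> (try (rw [htau2]; ring))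
  have r7 : Tτ * R * (Tτ * Tv) = R := by
    ext i j
    simp only [Units.val_mul, hTτ, hTv, hR]
    fin_cases i <;> fin_cases j <;>
      simp [Matrix.mul_apply, Fin.sum_univ_three, Matrix.vecHead, Matrix.vecTail] <;>
      (try ring_nf) <;> (try (rw [htau2]; ring))
  -- commutation facts
  have c1 : Commute Tv T₁ := r1
  have c2 : Commute Tv Tτ := r2
  have c3 : Commute Tv R := r3
  have hRinv : R⁻¹ = R := inv_eq_of_mul_eq_one_right r5
  -- conjugation by R
  have q1 : T₁ * R = R * (Tv⁻¹ * T₁⁻¹) := by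
    conv_rhs => rw [← r6]
    group
  have q1' : T₁⁻¹ * R = R * (T₁ * Tv) := by
    conv_lhs => rw [← r6]
    group
  have q2 : Tτ * R = R * (Tv⁻¹ * Tτ⁻¹) := by
    conv_rhs => rw [← r7]
    group
  have q2' : Tτ⁻¹ * R = R * (Tτ * Tv) := by
    conv_lhs => rw [← r7]
    group
  -- semiconjugation facts
  have sbj : SemiconjBy Tτ T₁ (T₁ * Tv⁻¹) := by
    have key : Tτ * T₁ = T₁ * Tτ * Tv⁻¹ := by rw [r4]; group
    show Tτ * T₁ = T₁ * Tv⁻¹ * Tτ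
    rw [key, mul_assoc, mul_assoc, ← (c2.inv_left).eq]
  have sbj' : SemiconjBy Tτ⁻¹ T₁ (T₁ * Tv) := by
    have key : T₁ * Tv = Tτ⁻¹ * (T₁ * Tτ) := by rw [r4]; group
    show Tτ⁻¹ * T₁ = T₁ * Tv * Tτ⁻¹
    rw [key]; group
  have s1m : ∀ m : ℤ, Tτ * T₁ ^ m = T₁ ^ m * Tv ^ (-m) * Tτ := by
    intro m
    have h := (sbj.zpow_right m).eq
    rw [h, Commute.mul_zpow (c1.symm.inv_right) m, _root_.inv_zpow']
  have s1m' : ∀ m : ℤ, Tτ⁻¹ * T₁ ^ m = T₁ ^ m * Tv ^ m * Tτ⁻¹ := by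
    intro m
    have h := (sbj'.zpow_right m).eq
    rw [h, Commute.mul_zpow c1.symm m]
  -- push lemmas (all right-associated with a trailing factor)
  have A1b : ∀ x : GL (Fin 3) ℂ, Tv * (R * x) = R * (Tv * x) := by
    intro x; rw [← mul_assoc, r3, mul_assoc]
  have A1b' : ∀ x : GL (Fin 3) ℂ, Tv⁻¹ * (R * x) = R * (Tv⁻¹ * x) := by
    intro x; rw [← mul_assoc, (c3.inv_left).eq, mul_assoc]
  have A2 : ∀ (i j : ℤ) (x : GL (Fin 3) ℂ), Tv ^ i * (Tv ^ j * x) = Tv ^ (i + j) * x := by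
    intro i j x; rw [← mul_assoc, ← _root_.zpow_add]
  have A2b : ∀ (j : ℤ) (x : GL (Fin 3) ℂ), Tv * (Tv ^ j * x) = Tv ^ (1 + j) * x := by
    intro j x; rw [← mul_assoc, ← _root_.zpow_one_add]
  have A2b' : ∀ (j : ℤ) (x : GL (Fin 3) ℂ), Tv⁻¹ * (Tv ^ j * x) = Tv ^ (-1 + j) * x := by
    intro j x
    rw [← mul_assoc, show Tv⁻¹ * Tv ^ j = Tv ^ (-1 + j) by rw [_root_.zpow_add, _root_.zpow_neg_one]]
  have A3 : ∀ (m : ℤ) (x : GL (Fin 3) ℂ), T₁ * (T₁ ^ m * x) = T₁ ^ (1 + m) * x := by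
    intro m x; rw [← mul_assoc, ← _root_.zpow_one_add]
  have A3' : ∀ (m : ℤ) (x : GL (Fin 3) ℂ), T₁⁻¹ * (T₁ ^ m * x) = T₁ ^ (-1 + m) * x := by
    intro m x
    rw [← mul_assoc, show T₁⁻¹ * T₁ ^ m = T₁ ^ (-1 + m) by rw [_root_.zpow_add, _root_.zpow_neg_one]]
  have A4 : ∀ (i : ℤ) (x : GL (Fin 3) ℂ), T₁ * (Tv ^ i * x) = Tv ^ i * (T₁ * x) := by
    intro i x; rw [← mul_assoc, ← (c1.zpow_left i).eq, mul_assoc]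
  have A4' : ∀ (i : ℤ) (x : GL (Fin 3) ℂ), T₁⁻¹ * (Tv ^ i * x) = Tv ^ i * (T₁⁻¹ * x) := by
    intro i x; rw [← mul_assoc, ← ((c1.zpow_left i).inv_right).eq, mul_assoc]
  have A7 : ∀ (i : ℤ) (x : GL (Fin 3) ℂ), Tτ * (Tv ^ i * x) = Tv ^ i * (Tτ * x) := by
    intro i x; rw [← mul_assoc, ← (c2.zpow_left i).eq, mul_assoc]
  have A7' : ∀ (i : ℤ) (x : GL (Fin 3) ℂ), Tτ⁻¹ * (Tv ^ i * x) = Tv ^ i * (Tτ⁻¹ * x) := by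
    intro i x; rw [← mul_assoc, ← ((c2.zpow_left i).inv_right).eq, mul_assoc]
  have A5 : ∀ x : GL (Fin 3) ℂ, T₁ * (R * x) = R * (Tv ^ (-1 : ℤ) * (T₁⁻¹ * x)) := by
    intro x; rw [← mul_assoc, q1, _root_.zpow_neg_one]; simp only [mul_assoc]
  have A5' : ∀ x : GL (Fin 3) ℂ, T₁⁻¹ * (R * x) = R * (Tv ^ (1 : ℤ) * (T₁ * x)) := by
    intro x; rw [← mul_assoc, q1', _root_.zpow_one, ← r1]; simp only [mul_assoc]
  have A9 : ∀ x : GL (Fin 3) ℂ, Tτ * (R * x) = R * (Tv ^ (-1 : ℤ) * (Tτ⁻¹ * x)) := by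
    intro x; rw [← mul_assoc, q2, _root_.zpow_neg_one]; simp only [mul_assoc]
  have A9' : ∀ x : GL (Fin 3) ℂ, Tτ⁻¹ * (R * x) = R * (Tv ^ (1 : ℤ) * (Tτ * x)) := by
    intro x; rw [← mul_assoc, q2', _root_.zpow_one, ← r2]; simp only [mul_assoc]
  have A6 : ∀ (m : ℤ) (x : GL (Fin 3) ℂ),
      Tτ * (T₁ ^ m * x) = Tv ^ (-m) * (T₁ ^ m * (Tτ * x)) := by
    intro m x
    rw [← mul_assoc, s1m m, ← (c1.zpow_zpow (-m) m).eq]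
    simp only [mul_assoc]
  have A6' : ∀ (m : ℤ) (x : GL (Fin 3) ℂ),
      Tτ⁻¹ * (T₁ ^ m * x) = Tv ^ m * (T₁ ^ m * (Tτ⁻¹ * x)) := by
    intro m x
    rw [← mul_assoc, s1m' m, ← (c1.zpow_zpow m m).eq]
    simp only [mul_assoc]
  have A8 : ∀ l : ℤ, Tτ * Tτ ^ l = Tτ ^ (1 + l) := by
    intro l; rw [_root_.zpow_one_add]
  have A8' : ∀ l : ℤ, Tτ⁻¹ * Tτ ^ l = Tτ ^ (-1 + l) := by
    intro l; rw [_root_.zpow_add, _root_.zpow_neg_one]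
  have A10 : ∀ x : GL (Fin 3) ℂ, R * (R * x) = x := by
    intro x; rw [← mul_assoc, r5, one_mul]
  -- main induction
  induction hγ using Subgroup.closure_induction_left with
  | one => exact ⟨0, 0, 0, 0, Nat.zero_le 1, by simp⟩
  | mul_left x hx y hy ih =>
    obtain ⟨m, n, l, p, hp, rfl⟩ := ih
    simp only [Set.mem_insert_iff, Set.mem_singleton_iff] at hx
    rcases hx with rfl | rfl | rfl | rfl <;> interval_cases p
    · exact ⟨1 + m, n, l, 0, Nat.zero_le 1, by
        simp only [pow_zero, pow_one, one_mul, mul_assoc]; rw [A4, A3]⟩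
    · exact ⟨-1 + m, -1 + n, l, 1, le_refl 1, by
        simp only [pow_zero, pow_one, one_mul, mul_assoc]; rw [A5, A4', A2, A3']⟩
    · exact ⟨m, n + -m, 1 + l, 0, Nat.zero_le 1, by
        simp only [pow_zero, pow_one, one_mul, mul_assoc]; rw [A7, A6, A2, A8]⟩
    · exact ⟨m, -1 + n + m, -1 + l, 1, le_refl 1, by
        simp only [pow_zero, pow_one, one_mul, mul_assoc]; rw [A9, A7', A2, A6', A2, A8']⟩
    · exact ⟨m, 1 + n, l, 0, Nat.zero_le 1, by
        simp only [pow_zero, pow_one, one_mul, mul_assoc]; rw [A2b]⟩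
    · exact ⟨m, 1 + n, l, 1, le_refl 1, by
        simp only [pow_zero, pow_one, one_mul, mul_assoc]; rw [A1b, A2b]⟩
    · exact ⟨m, n, l, 1, le_refl 1, by
        simp only [pow_zero, pow_one, one_mul, mul_assoc]⟩
    · exact ⟨m, n, l, 0, Nat.zero_le 1, by
        simp only [pow_zero, pow_one, one_mul, mul_assoc]; rw [A10]⟩
  | inv_mul_cancel x hx y hy ih =>
    obtain ⟨m, n, l, p, hp, rfl⟩ := ih
    simp only [Set.mem_insert_iff, Set.mem_singleton_iff] at hx
    rcases hx with rfl | rfl | rfl | rfl <;> interval_cases p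
    · exact ⟨-1 + m, n, l, 0, Nat.zero_le 1, by
        simp only [pow_zero, pow_one, one_mul, mul_assoc]; rw [A4', A3']⟩
    · exact ⟨1 + m, 1 + n, l, 1, le_refl 1, by
        simp only [pow_zero, pow_one, one_mul, mul_assoc]; rw [A5', A4, A2, A3]⟩
    · exact ⟨m, n + m, -1 + l, 0, Nat.zero_le 1, by
        simp only [pow_zero, pow_one, one_mul, mul_assoc]; rw [A7', A6', A2, A8']⟩
    · exact ⟨m, 1 + n + -m, 1 + l, 1, le_refl 1, by
        simp only [pow_zero, pow_one, one_mul, mul_assoc]; rw [A9', A7, A2, A6, A2, A8]⟩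
    · exact ⟨m, -1 + n, l, 0, Nat.zero_le 1, by
        simp only [pow_zero, pow_one, one_mul, mul_assoc]; rw [A2b']⟩
    · exact ⟨m, -1 + n, l, 1, le_refl 1, by
        simp only [pow_zero, pow_one, one_mul, mul_assoc]; rw [A1b', A2b']⟩
    · exact ⟨m, n, l, 1, le_refl 1, by
        rw [hRinv]; simp only [pow_zero, pow_one, one_mul, mul_assoc]⟩
    · exact ⟨m, n, l, 0, Nat.zero_le 1, by
        rw [hRinv]; simp only [pow_zero, pow_one, one_mul, mul_assoc]; rw [A10]⟩
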